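/- Let r(x_1,…,x_l) be a polynomial and for n ≥ l define R_n(x_1,…,x_n) = r(x_1,…,x_l) · ∏_{i≤l, i<j≤n} (x_i+x_j)/(x_i−x_j), and let R̃_n(x_1,…,x_n) = ∑_{ω ∈ S(n)} R_n(x_{ω(1)},…,x_{ω(n)}). Then R̃_n is a polynomial in x_1,…,x_n of degree at most deg r. -/

import Mathlib

set_option synthInstance.maxHeartbeats 1000000
set_option maxHeartbeats 1000000


noncomputable section

abbrev K (n : ℕ) : Type := FractionRing (MvPolynomial (Fin n) ℂ)

def Xv {n : ℕ} (i : Fin n) : K n :=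
  algebraMap (MvPolynomial (Fin n) ℂ) (K n) (MvPolynomial.X i)

/-- The product over pairs `i < j` with `i < l` of `(x i + x j)/(x i - x j)`. -/
def ratioProd {n : ℕ} (l : ℕ) (x : Fin n → K n) : K n :=
  ∏ p ∈ Finset.univ.filter (fun p : Fin n × Fin n => (p.1 : ℕ) < l ∧ p.1 < p.2),
    (x p.1 + x p.2) / (x p.1 - x p.2)

/-- `R̃_n = ∑_{ω ∈ S(n)} r(x_{ω(1)},…,x_{ω(l)}) ∏_{i≤l, i<j≤n}
(x_{ω(i)}+x_{ω(j)})/(x_{ω(i)}−x_{ω(j)})`, as a rational function. -/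
def Rtilde (n l : ℕ) (hl : l ≤ n) (r : MvPolynomial (Fin l) ℂ) : K n :=
  ∑ ω : Equiv.Perm (Fin n),
    (MvPolynomial.eval₂
        ((algebraMap (MvPolynomial (Fin n) ℂ) (K n)).comp MvPolynomial.C)
        (fun i : Fin l => Xv (ω (Fin.castLE hl i))) r) *
      ratioProd l (fun j => Xv (ω j))

open MvPolynomial Finset

abbrev Amv (n : ℕ) : Type := MvPolynomial (Fin n) ℂ

/-! ### Generic auxiliary lemmas -/

lemma sub_dvd_sub_aeval {σ : Type*} [DecidableEq σ] {R : Type*} [CommRing R] (b : σ)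
    (u : MvPolynomial σ R) (p : MvPolynomial σ R) :
    (X b - u) ∣ (p - MvPolynomial.aeval (fun i => if i = b then u else X i) p) := by
  induction p using MvPolynomial.induction_on with
  | C a => simp [aeval_C, algebraMap_eq]
  | add p q hp hq =>
      have : (p + q) - aeval (fun i => if i = b then u else X i) (p + q) =
          (p - aeval (fun i => if i = b then u else X i) p) +
          (q - aeval (fun i => if i = b then u else X i) q) := by
        rw [map_add]; ring
      rw [this]; exact dvd_add hp hq
  | mul_X p i hp =>
      have key : (p * X i) - aeval (fun j => if j = b then u else X j) (p * X i) =
          (p - aeval (fun j => if j = b then u else X j) p) * X i +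
          aeval (fun j => if j = b then u else X j) p *
            (X i - (if i = b then u else X i)) := by
        rw [map_mul, aeval_X]; ring
      rw [key]
      refine dvd_add (Dvd.dvd.mul_right hp _) (Dvd.dvd.mul_left ?_ _)
      by_cases h : i = b
      · subst h; simp
      · simp [h]

lemma sub_dvd_of_aeval_eq_zero {σ : Type*} [DecidableEq σ] {R : Type*} [CommRing R] (b : σ)
    (u : MvPolynomial σ R) (p : MvPolynomial σ R)
    (h : MvPolynomial.aeval (fun i => if i = b then u else X i) p = 0) :
    (X b - u) ∣ p := by
  have := sub_dvd_sub_aeval b u p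
  rwa [h, sub_zero] at this

lemma prime_X_sub_X {n : ℕ} {a b : Fin n} (hab : a ≠ b) :
    Prime (X b - X a : Amv n) := by
  let E := (renameEquiv ℂ (Equiv.optionSubtypeNe b).symm).trans
    (optionEquivLeft ℂ {i : Fin n // i ≠ b})
  rw [← MulEquiv.prime_iff E.toRingEquiv.toMulEquiv]
  have h1 : E (X b) = Polynomial.X := by
    simp only [E, AlgEquiv.trans_apply, renameEquiv_apply, rename_X,
      Equiv.optionSubtypeNe_symm_self, optionEquivLeft_X_none]
  have h2 : E (X a) = Polynomial.C (X ⟨a, hab⟩) := by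
    simp only [E, AlgEquiv.trans_apply, renameEquiv_apply, rename_X,
      Equiv.optionSubtypeNe_symm_of_ne hab, optionEquivLeft_X_some]
  have : E.toRingEquiv.toMulEquiv (X b - X a) = Polynomial.X - Polynomial.C (X ⟨a, hab⟩) := by
    show E (X b - X a) = _
    rw [map_sub, h1, h2]
  rw [this]
  exact Polynomial.prime_X_sub_C _

lemma totalDegree_le_of_homog_mul {n : ℕ} {v q : Amv n} {D t : ℕ}
    (hv : v.IsHomogeneous D) (hv0 : v ≠ 0) (h : (v * q).totalDegree ≤ D + t) :
    q.totalDegree ≤ t := by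
  by_contra ht
  push_neg at ht
  set d := q.totalDegree with hd
  have hq0 : q ≠ 0 := by
    rintro rfl
    rw [hd, totalDegree_zero] at ht
    exact Nat.not_lt_zero t ht
  have hqd : homogeneousComponent d q ≠ 0 := by
    obtain ⟨m, hm, hmd⟩ : ∃ m ∈ q.support, (m.sum fun _ e => e) = d := by
      obtain ⟨m, hm, hmd⟩ := Finset.exists_mem_eq_sup q.support
        (support_nonempty.mpr hq0) (fun s => s.sum fun _ e => e)
      exact ⟨m, hm, hmd.symm⟩
    intro h0
    have := coeff_homogeneousComponent (n := d) (φ := q) m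
    rw [h0, coeff_zero] at this
    have hdeg : m.degree = d := by
      rw [Finsupp.degree]; rw [← hmd]; rfl
    rw [if_pos hdeg] at this
    exact (mem_support_iff.mp hm) this.symm
  have hcomp : v * homogeneousComponent d q = homogeneousComponent (D + d) (v * q) := by
    conv_rhs => rw [← sum_homogeneousComponent q]
    rw [Finset.mul_sum, map_sum]
    rw [Finset.sum_congr rfl (fun i _ => homogeneousComponent_of_mem
      (hv.mul (homogeneousComponent_isHomogeneous i q)))]
    simp only [add_right_inj]
    rw [Finset.sum_ite_eq]
    rw [if_pos (Finset.mem_range.mpr (Nat.lt_succ_self _))]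
  have hzero : homogeneousComponent (D + d) (v * q) = 0 :=
    homogeneousComponent_eq_zero _ _ (lt_of_le_of_lt h (by omega))
  rw [hzero] at hcomp
  rcases mul_eq_zero.mp hcomp with h1 | h1
  · exact hv0 h1
  · exact hqd h1

/-! ### Combinatorial set-up -/

def Pset (n : ℕ) : Finset (Fin n × Fin n) := Finset.univ.filter fun q => q.1 < q.2
def Sset (n l : ℕ) : Finset (Fin n × Fin n) :=
  Finset.univ.filter fun q : Fin n × Fin n => (q.1 : ℕ) < l ∧ q.1 < q.2
def dP {n : ℕ} (q : Fin n × Fin n) : Amv n := X q.2 - X q.1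
def Vpoly (n : ℕ) : Amv n := ∏ q ∈ Pset n, dP q
def sortp {n : ℕ} (ω : Equiv.Perm (Fin n)) (p : Fin n × Fin n) : Fin n × Fin n :=
  if ω p.1 < ω p.2 then (ω p.1, ω p.2) else (ω p.2, ω p.1)
def sgnp {n : ℕ} (ω : Equiv.Perm (Fin n)) (p : Fin n × Fin n) : ℂ :=
  if ω p.1 < ω p.2 then -1 else 1

variable {n : ℕ}

lemma mem_Sset {l : ℕ} {p : Fin n × Fin n} (hp : p ∈ Sset n l) : p.1 < p.2 :=
  (Finset.mem_filter.mp hp).2.2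

lemma mem_Pset {p : Fin n × Fin n} (hp : p ∈ Pset n) : p.1 < p.2 :=
  (Finset.mem_filter.mp hp).2

lemma sortp_mem {ω : Equiv.Perm (Fin n)} {p : Fin n × Fin n} (hp : p.1 < p.2) :
    sortp ω p ∈ Pset n := by
  have hne : ω p.1 ≠ ω p.2 := fun h => absurd (ω.injective h) (ne_of_lt hp)
  unfold sortp
  split_ifs with h
  · simpa [Pset] using h
  · simp only [Pset, mem_filter, mem_univ, true_and]
    exact lt_of_le_of_ne (not_lt.mp h) (Ne.symm hne)

lemma sortp_injOn {l : ℕ} (ω : Equiv.Perm (Fin n)) :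
    ∀ p ∈ Sset n l, ∀ p' ∈ Sset n l, sortp ω p = sortp ω p' → p = p' := by
  intro p hp p' hp' h
  have h1 : p.1 < p.2 := mem_Sset hp
  have h2 : p'.1 < p'.2 := mem_Sset hp'
  unfold sortp at h
  split_ifs at h with hA hB hB <;>
    rw [Prod.ext_iff] at h <;>
    obtain ⟨ha, hb⟩ := h
  · exact Prod.ext (ω.injective ha) (ω.injective hb)
  · have e1 : p.1 = p'.2 := ω.injective ha
    have e2 : p.2 = p'.1 := ω.injective hb
    rw [e1, e2] at h1
    exact absurd h2 (not_lt.mpr h1.le)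
  · have e1 : p.2 = p'.1 := ω.injective ha
    have e2 : p.1 = p'.2 := ω.injective hb
    rw [e2, e1] at h1
    exact absurd h2 (not_lt.mpr h1.le)
  · exact Prod.ext (ω.injective hb) (ω.injective ha)

lemma dP_perm (ω : Equiv.Perm (Fin n)) (p : Fin n × Fin n) :
    (X (ω p.1) - X (ω p.2) : Amv n) = C (sgnp ω p) * dP (sortp ω p) := by
  unfold sgnp sortp dP
  split_ifs <;> simp

lemma sgnp_sq (ω : Equiv.Perm (Fin n)) (p : Fin n × Fin n) : sgnp ω p * sgnp ω p = 1 := by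
  unfold sgnp; split_ifs <;> norm_num

lemma image_sortp_subset {l : ℕ} (ω : Equiv.Perm (Fin n)) :
    (Sset n l).image (sortp ω) ⊆ Pset n := by
  intro q hq
  obtain ⟨p, hp, rfl⟩ := Finset.mem_image.mp hq
  exact sortp_mem (mem_Sset hp)

lemma core_identity {l : ℕ} (ω : Equiv.Perm (Fin n)) :
    Vpoly n = C (∏ p ∈ Sset n l, sgnp ω p) *
      (∏ q ∈ Pset n \ (Sset n l).image (sortp ω), dP q) *
      ∏ p ∈ Sset n l, (X (ω p.1) - X (ω p.2) : Amv n) := by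
  have hs : (C (∏ p ∈ Sset n l, sgnp ω p) : Amv n) *
      C (∏ p ∈ Sset n l, sgnp ω p) = 1 := by
    rw [← map_mul, ← Finset.prod_mul_distrib,
      Finset.prod_congr rfl fun p _ => sgnp_sq ω p, Finset.prod_const_one, map_one]
  rw [Finset.prod_congr rfl fun p _ => dP_perm ω p, Finset.prod_mul_distrib, ← map_prod]
  rw [mul_mul_mul_comm, hs, one_mul,
    ← Finset.prod_image (sortp_injOn ω), Finset.prod_sdiff (image_sortp_subset ω)]
  rfl

/-! ### Vandermonde facts -/

lemma prod_P {M : Type*} [CommMonoid M] (f : Fin n × Fin n → M) :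
    ∏ q ∈ Pset n, f q = ∏ i : Fin n, ∏ j ∈ Finset.Ioi i, f (i, j) := by
  rw [Pset, ← Finset.univ_product_univ, Finset.prod_filter, Finset.prod_product]
  refine Finset.prod_congr rfl fun i _ => ?_
  rw [← Finset.filter_lt_eq_Ioi, Finset.prod_filter]

lemma V_eq_det :
    Vpoly n = (Matrix.vandermonde (fun i : Fin n => (X i : Amv n))).det := by
  rw [Matrix.det_vandermonde, Vpoly, prod_P]
  rfl

lemma rename_swap_V {a b : Fin n} (hab : a ≠ b) :
    rename (Equiv.swap a b) (Vpoly n) = - Vpoly n := by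
  rw [V_eq_det]
  rw [← AlgHom.coe_toRingHom, RingHom.map_det]
  have : (Matrix.vandermonde (fun i : Fin n => (X i : Amv n))).map
      (↑(rename (R := ℂ) (Equiv.swap a b)) : Amv n →+* Amv n) =
      (Matrix.vandermonde (fun i : Fin n => (X i : Amv n))).submatrix
        (Equiv.swap a b) id := by
    ext i j
    simp [Matrix.vandermonde, Matrix.map_apply, Matrix.submatrix_apply]
  rw [RingHom.mapMatrix_apply, this, Matrix.det_permute, Equiv.Perm.sign_swap hab]
  simp

/-! ### The numerator polynomials -/

def Epoly (n l : ℕ) (hl : l ≤ n) (r : MvPolynomial (Fin l) ℂ) (ω : Equiv.Perm (Fin n)) :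
    Amv n :=
  rename (fun i => ω (Fin.castLE hl i)) r

def Npoly (n l : ℕ) (hl : l ≤ n) (r : MvPolynomial (Fin l) ℂ) (ω : Equiv.Perm (Fin n)) :
    Amv n :=
  C (∏ p ∈ Sset n l, sgnp ω p) * Epoly n l hl r ω *
    (∏ p ∈ Sset n l, (X (ω p.1) + X (ω p.2))) *
    ∏ q ∈ Pset n \ (Sset n l).image (sortp ω), dP q

def Tterm (n l : ℕ) (hl : l ≤ n) (r : MvPolynomial (Fin l) ℂ) (ω : Equiv.Perm (Fin n)) :
    K n :=
  (MvPolynomial.eval₂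
      ((algebraMap (Amv n) (K n)).comp MvPolynomial.C)
      (fun i : Fin l => Xv (ω (Fin.castLE hl i))) r) *
    ratioProd l (fun j => Xv (ω j))

lemma Rtilde_eq_sum (n l : ℕ) (hl : l ≤ n) (r : MvPolynomial (Fin l) ℂ) :
    Rtilde n l hl r = ∑ ω : Equiv.Perm (Fin n), Tterm n l hl r ω := rfl

lemma phi_Epoly (n l : ℕ) (hl : l ≤ n) (r : MvPolynomial (Fin l) ℂ) (ω : Equiv.Perm (Fin n)) :
    algebraMap (Amv n) (K n) (Epoly n l hl r ω) =
      MvPolynomial.eval₂ ((algebraMap (Amv n) (K n)).comp MvPolynomial.C)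
        (fun i : Fin l => Xv (ω (Fin.castLE hl i))) r := by
  conv_lhs => rw [show (Epoly n l hl r ω) = eval₂ C X (Epoly n l hl r ω) from
    (eval₂_eta _).symm]
  rw [eval₂_comp_left (algebraMap (Amv n) (K n)) C X, Epoly, eval₂_rename]
  rfl

lemma Xv_sub_ne {ω : Equiv.Perm (Fin n)} {p : Fin n × Fin n} (hp : p.1 < p.2) :
    Xv (ω p.1) - Xv (ω p.2) ≠ 0 := by
  have h1 : (X (ω p.1) - X (ω p.2) : Amv n) ≠ 0 := by
    refine sub_ne_zero.mpr fun h => ?_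
    exact absurd (ω.injective (X_injective h)) (ne_of_lt hp)
  have : Xv (ω p.1) - Xv (ω p.2) =
      algebraMap (Amv n) (K n) (X (ω p.1) - X (ω p.2)) := by
    rw [RingHom.map_sub]; rfl
  rw [this]
  exact fun h => h1 (IsFractionRing.injective (Amv n) (K n) (by rw [h, map_zero]))

lemma phi_N_eq (n l : ℕ) (hl : l ≤ n) (r : MvPolynomial (Fin l) ℂ) (ω : Equiv.Perm (Fin n)) :
    algebraMap (Amv n) (K n) (Npoly n l hl r ω) =
      algebraMap (Amv n) (K n) (Vpoly n) * Tterm n l hl r ω := by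
  set φ := algebraMap (Amv n) (K n) with hφ
  have hkey : (∏ p ∈ Sset n l, (Xv (ω p.1) - Xv (ω p.2))) *
      ∏ p ∈ Sset n l, ((Xv (ω p.1) + Xv (ω p.2)) / (Xv (ω p.1) - Xv (ω p.2))) =
      ∏ p ∈ Sset n l, (Xv (ω p.1) + Xv (ω p.2)) := by
    rw [← Finset.prod_mul_distrib]
    exact Finset.prod_congr rfl fun p hp => mul_div_cancel₀ _ (Xv_sub_ne (mem_Sset hp))
  have hV : φ (Vpoly n) = φ (C (∏ p ∈ Sset n l, sgnp ω p)) *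
      φ (∏ q ∈ Pset n \ (Sset n l).image (sortp ω), dP q) *
      ∏ p ∈ Sset n l, (Xv (ω p.1) - Xv (ω p.2)) := by
    rw [core_identity (l := l) ω, map_mul, map_mul]
    congr 1
    rw [map_prod]
    exact Finset.prod_congr rfl fun p _ => by rw [RingHom.map_sub]; rfl
  have hT : Tterm n l hl r ω = φ (Epoly n l hl r ω) *
      ∏ p ∈ Sset n l, ((Xv (ω p.1) + Xv (ω p.2)) / (Xv (ω p.1) - Xv (ω p.2))) := by
    rw [Tterm, phi_Epoly]
    rfl
  have hN : φ (Npoly n l hl r ω) = φ (C (∏ p ∈ Sset n l, sgnp ω p)) *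
      φ (Epoly n l hl r ω) * (∏ p ∈ Sset n l, (Xv (ω p.1) + Xv (ω p.2))) *
      φ (∏ q ∈ Pset n \ (Sset n l).image (sortp ω), dP q) := by
    rw [Npoly, map_mul, map_mul, map_mul]
    congr 1
    congr 1
    rw [map_prod]
    exact Finset.prod_congr rfl fun p _ => by rw [RingHom.map_add]; rfl
  rw [hN, hV, hT, ← hkey]
  ring


/-! ### Cancellation: each `dP q` divides the numerator sum -/

lemma fin_cast_ne {x y : Fin n} (h : x ≠ y) : ((x : ℕ) : ℂ) ≠ ((y : ℕ) : ℂ) :=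
  fun hh => h (Fin.val_injective (Nat.cast_injective hh))

lemma dP_dvd_Nsum (n l : ℕ) (hl : l ≤ n) (r : MvPolynomial (Fin l) ℂ)
    {q : Fin n × Fin n} (hq : q ∈ Pset n) :
    dP q ∣ ∑ ω : Equiv.Perm (Fin n), Npoly n l hl r ω := by
  classical
  set φ := algebraMap (Amv n) (K n) with hφdef
  have hφinj : Function.Injective φ := IsFractionRing.injective _ _
  obtain ⟨a, b⟩ := q
  have hab : a ≠ b := ne_of_lt (mem_Pset hq)
  set s : Equiv.Perm (Fin n) := Equiv.swap a b with hs
  set Nsum := ∑ ω : Equiv.Perm (Fin n), Npoly n l hl r ω with hNs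
  have hNsum : φ Nsum = φ (Vpoly n) * Rtilde n l hl r := by
    rw [hNs, map_sum, Rtilde_eq_sum, Finset.mul_sum]
    exact Finset.sum_congr rfl fun ω _ => phi_N_eq n l hl r ω
  have hginj : Function.Injective (φ.comp (↑(rename (R := ℂ) s) : Amv n →+* Amv n)) :=
    hφinj.comp (rename_injective _ s.injective)
  set Lf := IsFractionRing.lift (K := K n) hginj with hLdef
  have hLφ : ∀ x : Amv n, Lf (φ x) = φ (rename s x) := fun x =>
    IsFractionRing.lift_algebraMap hginj x
  have hLXv : ∀ c : Fin n, Lf (Xv c) = Xv (s c) := by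
    intro c
    rw [show Xv c = φ (X c) from rfl, hLφ, rename_X]
    rfl
  have hLT : ∀ ω, Lf (Tterm n l hl r ω) = Tterm n l hl r (s * ω) := by
    intro ω
    rw [Tterm, Tterm, map_mul]
    congr 1
    · rw [eval₂_comp_left Lf]
      congr 1
      · ext c
        simp only [RingHom.comp_apply]
        rw [hLφ, rename_C]
      · funext i
        simp only [Function.comp_apply]
        rw [hLXv]
        rfl
    · rw [ratioProd, ratioProd, map_prod]
      refine Finset.prod_congr rfl fun p hp => ?_
      rw [map_div₀, map_add, map_sub]
      simp only [hLXv]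
      rfl
  have hLR : Lf (Rtilde n l hl r) = Rtilde n l hl r := by
    rw [Rtilde_eq_sum, map_sum, Finset.sum_congr rfl fun ω _ => hLT ω]
    exact Fintype.sum_equiv (Equiv.mulLeft s) _ _ fun ω => rfl
  have hρN : rename s Nsum = - Nsum := by
    apply hφinj
    rw [map_neg, ← hLφ, hNsum, map_mul, hLR, hLφ, rename_swap_V hab, map_neg]
    ring
  have hsubst : (fun i => if i = b then (X a : Amv n) else X i) ∘ s =
      (fun i => if i = b then (X a : Amv n) else X i) := by
    funext i
    by_cases hia : i = a
    · subst hia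
      simp [hs, Equiv.swap_apply_left]
    · by_cases hib : i = b
      · subst hib
        simp [hs, Equiv.swap_apply_right, hab]
      · simp [hs, Equiv.swap_apply_of_ne_of_ne hia hib]
  have hψρ : aeval (fun i => if i = b then (X a : Amv n) else X i) (rename s Nsum) =
      aeval (fun i => if i = b then (X a : Amv n) else X i) Nsum := by
    rw [aeval_rename, hsubst]
  have hψ0 : aeval (fun i => if i = b then (X a : Amv n) else X i) Nsum = 0 := by
    have h0 : aeval (fun i => if i = b then (X a : Amv n) else X i) Nsum =
        - aeval (fun i => if i = b then (X a : Amv n) else X i) Nsum := by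
      conv_lhs => rw [← hψρ, hρN]
      rw [map_neg]
    have h2 : (2 : Amv n) * aeval (fun i => if i = b then (X a : Amv n) else X i) Nsum = 0 := by
      rw [two_mul]
      nth_rewrite 1 [h0]
      ring
    rcases mul_eq_zero.mp h2 with h | h
    · exact absurd h two_ne_zero
    · exact h
  exact sub_dvd_of_aeval_eq_zero b (X a) Nsum hψ0

/-! ### From individual divisibility to divisibility by the Vandermonde product -/

lemma dP_not_dvd_prod {q : Fin n × Fin n} (hq : q ∈ Pset n) {s : Finset (Fin n × Fin n)}
    (hs : s ⊆ Pset n) (hqs : q ∉ s) : ¬ dP q ∣ ∏ q' ∈ s, dP q' := by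
  rintro ⟨M, hM⟩
  set v : Fin n → ℂ := fun i => if i = q.2 then ((q.1 : ℕ) : ℂ) else ((i : ℕ) : ℂ) with hv
  have hq12 : q.1 < q.2 := mem_Pset hq
  have hvq : eval v (dP q) = 0 := by
    rw [dP, map_sub, eval_X, eval_X, hv]
    simp [ne_of_lt hq12]
  have hfac : ∀ q' ∈ s, eval v (dP q') ≠ 0 := by
    intro q' hq'
    have h12 : q'.1 < q'.2 := mem_Pset (hs hq')
    have hne : q' ≠ q := fun h => hqs (h ▸ hq')
    rw [dP, map_sub, eval_X, eval_X]
    simp only [hv]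
    by_cases he : q'.2 = q.2
    · rw [if_pos he]
      have hc : q'.1 ≠ q.2 := ne_of_lt (he ▸ h12)
      rw [if_neg hc]
      refine sub_ne_zero.mpr (fin_cast_ne fun h => hne (Prod.ext (h.symm) he))
    · rw [if_neg he]
      by_cases hc : q'.1 = q.2
      · rw [if_pos hc]
        have : q.1 < q'.2 := lt_trans hq12 (hc ▸ h12)
        exact sub_ne_zero.mpr (fin_cast_ne (ne_of_gt this))
      · rw [if_neg hc]
        exact sub_ne_zero.mpr (fin_cast_ne (ne_of_gt h12))
  have hprod : eval v (∏ q' ∈ s, dP q') ≠ 0 := by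
    rw [map_prod]
    exact Finset.prod_ne_zero_iff.mpr hfac
  rw [hM, map_mul, hvq, zero_mul] at hprod
  exact hprod rfl

lemma prod_dP_dvd {N : Amv n} (hN : ∀ q ∈ Pset n, dP q ∣ N) :
    ∀ s ⊆ Pset n, (∏ q ∈ s, dP q) ∣ N := by
  classical
  intro s
  refine Finset.induction_on s ?_ ?_
  · intro _
    simp
  · intro q t hqt ih hsub
    have hq : q ∈ Pset n := hsub (mem_insert_self q t)
    have ht : t ⊆ Pset n := fun x hx => hsub (mem_insert_of_mem hx)
    obtain ⟨M, hM⟩ := ih ht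
    have hprime : Prime (dP q) := prime_X_sub_X (ne_of_lt (mem_Pset hq))
    have hdq : dP q ∣ (∏ q' ∈ t, dP q') * M := hM ▸ hN q hq
    rcases hprime.dvd_mul.mp hdq with h | h
    · exact absurd h (dP_not_dvd_prod hq ht hqt)
    · obtain ⟨M', hM'⟩ := h
      refine ⟨M', ?_⟩
      rw [Finset.prod_insert hqt, hM, hM']
      ring

/-! ### Main theorem -/

/-- The symmetrized rational function `R̃_n` is in fact a polynomial in
`x_1, …, x_n`, of total degree at most `deg r`. -/
theorem Rtilde_isPolynomial_of_degree_le
    (n l : ℕ) (hl : l ≤ n) (r : MvPolynomial (Fin l) ℂ) :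
    ∃ p : MvPolynomial (Fin n) ℂ,
      algebraMap (MvPolynomial (Fin n) ℂ) (K n) p = Rtilde n l hl r ∧
        p.totalDegree ≤ r.totalDegree := by
  classical
  set φ := algebraMap (Amv n) (K n) with hφdef
  have hφinj : Function.Injective φ := IsFractionRing.injective _ _
  set Nsum := ∑ ω : Equiv.Perm (Fin n), Npoly n l hl r ω with hNs
  have hNsum : φ Nsum = φ (Vpoly n) * Rtilde n l hl r := by
    rw [hNs, map_sum, Rtilde_eq_sum, Finset.mul_sum]
    exact Finset.sum_congr rfl fun ω _ => phi_N_eq n l hl r ω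
  obtain ⟨p, hp⟩ : Vpoly n ∣ Nsum :=
    prod_dP_dvd (fun q hq => dP_dvd_Nsum n l hl r hq) (Pset n) Finset.Subset.rfl
  have hV0 : Vpoly n ≠ 0 := by
    rw [Vpoly]
    refine Finset.prod_ne_zero_iff.mpr fun q hq => ?_
    exact sub_ne_zero.mpr fun h => absurd (X_injective h) (ne_of_gt (mem_Pset hq))
  have hφV0 : φ (Vpoly n) ≠ 0 := fun h => hV0 (hφinj (by rw [h, map_zero]))
  have hmain : φ p = Rtilde n l hl r := by
    apply mul_left_cancel₀ hφV0
    rw [← map_mul, ← hp, hNsum]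
  have hdegN : Nsum.totalDegree ≤ (Pset n).card + r.totalDegree := by
    rw [hNs]
    refine totalDegree_finsetSum_le fun ω _ => ?_
    have hcardim : ((Sset n l).image (sortp ω)).card = (Sset n l).card :=
      Finset.card_image_of_injOn (fun x hx y hy h => sortp_injOn ω x hx y hy h)
    have hSP : (Sset n l).card ≤ (Pset n).card := by
      rw [← hcardim]
      exact Finset.card_le_card (image_sortp_subset ω)
    have h1 : (Epoly n l hl r ω).totalDegree ≤ r.totalDegree := totalDegree_rename_le _ _
    have h2 : (∏ p ∈ Sset n l, (X (ω p.1) + X (ω p.2) : Amv n)).totalDegree ≤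
        (Sset n l).card := by
      refine le_trans (totalDegree_finset_prod _ _) ?_
      calc ∑ p ∈ Sset n l, (X (ω p.1) + X (ω p.2) : Amv n).totalDegree
          ≤ ∑ _p ∈ Sset n l, 1 := Finset.sum_le_sum fun p _ =>
            le_trans (totalDegree_add _ _) (by simp [totalDegree_X])
        _ = (Sset n l).card := by rw [Finset.sum_const, smul_eq_mul, mul_one]
    have h3 : (∏ q ∈ Pset n \ (Sset n l).image (sortp ω), dP q).totalDegree ≤
        (Pset n).card - (Sset n l).card := by
      refine le_trans (totalDegree_finset_prod _ _) ?_
      calc ∑ q ∈ Pset n \ (Sset n l).image (sortp ω), (dP q).totalDegree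
          ≤ ∑ _q ∈ Pset n \ (Sset n l).image (sortp ω), 1 :=
            Finset.sum_le_sum fun q _ => by
              rw [dP, sub_eq_add_neg]
              refine le_trans (totalDegree_add _ _) ?_
              simp [totalDegree_X, totalDegree_neg]
        _ = (Pset n \ (Sset n l).image (sortp ω)).card := by
            rw [Finset.sum_const, smul_eq_mul, mul_one]
        _ = (Pset n).card - (Sset n l).card := by
            rw [Finset.card_sdiff_of_subset (image_sortp_subset ω), hcardim]
    calc (Npoly n l hl r ω).totalDegree
        ≤ (C (∏ p ∈ Sset n l, sgnp ω p) * Epoly n l hl r ω *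
            (∏ p ∈ Sset n l, (X (ω p.1) + X (ω p.2) : Amv n))).totalDegree +
          (∏ q ∈ Pset n \ (Sset n l).image (sortp ω), dP q).totalDegree :=
          totalDegree_mul _ _
      _ ≤ ((C (∏ p ∈ Sset n l, sgnp ω p) * Epoly n l hl r ω).totalDegree +
            (∏ p ∈ Sset n l, (X (ω p.1) + X (ω p.2) : Amv n)).totalDegree) +
          (∏ q ∈ Pset n \ (Sset n l).image (sortp ω), dP q).totalDegree :=
          add_le_add_left (totalDegree_mul _ _) _
      _ ≤ (((C (∏ p ∈ Sset n l, sgnp ω p) : Amv n).totalDegree +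
            (Epoly n l hl r ω).totalDegree) +
            (∏ p ∈ Sset n l, (X (ω p.1) + X (ω p.2) : Amv n)).totalDegree) +
          (∏ q ∈ Pset n \ (Sset n l).image (sortp ω), dP q).totalDegree :=
          add_le_add_left (add_le_add_left (totalDegree_mul _ _) _) _
      _ ≤ ((0 + r.totalDegree) + (Sset n l).card) + ((Pset n).card - (Sset n l).card) := by
          refine add_le_add (add_le_add (add_le_add ?_ h1) h2) h3
          rw [totalDegree_C]
      _ ≤ (Pset n).card + r.totalDegree := by omega
  have hVhom : (Vpoly n).IsHomogeneous (Pset n).card := by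
    have := IsHomogeneous.prod (Pset n) dP (fun _ => 1)
      (fun q _ => ((isHomogeneous_X ℂ q.2).sub (isHomogeneous_X ℂ q.1)))
    simpa [Vpoly] using this
  have hdegp : p.totalDegree ≤ r.totalDegree := by
    refine totalDegree_le_of_homog_mul hVhom hV0 ?_
    rw [← hp]
    exact hdegN
  exact ⟨p, hmain, hdegp⟩

end
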